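/- Let w : ℝ/ℤ → ℝ satisfy the one-sided Lipschitz condition (w(x₁) - w(x₂))/(x₁ - x₂) ≤ b₃ for all x₁ > x₂ (with b₃ > 0), and suppose |∫_{x'}^{x} w(y) dy| ≤ b₂ √(Δx) for all x, x' and some b₂ > 0, Δx ∈ (0,1]. Then for any b₄ > 0 with b₄²/(4b₂) > b₃, we have sup_x |w(x)| ≤ b₄ Δx^{1/4}. -/

import Mathlib

open MeasureTheory intervalIntegral

lemma aux_int_lb (b₃ M x : ℝ) (hb₃ : 0 < b₃) (hM : 0 < M) (w : ℝ → ℝ)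
    (hint : IntervalIntegrable w volume (x - M / b₃) x)
    (holz : ∀ x₁ x₂ : ℝ, x₂ < x₁ → w x₁ - w x₂ ≤ b₃ * (x₁ - x₂))
    (hw : M ≤ w x) :
    M ^ 2 / (2 * b₃) ≤ ∫ y in (x - M / b₃)..x, w y := by
  set L : ℝ := M / b₃ with hL
  have hLpos : 0 < L := div_pos hM hb₃
  have hax : x - L ≤ x := by linarith
  have hcont : Continuous (fun y : ℝ => (M - b₃ * x) + b₃ * y) := by continuity
  have hint2 : IntervalIntegrable (fun y : ℝ => (M - b₃ * x) + b₃ * y) volume (x - L) x :=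
    hcont.intervalIntegrable _ _
  have hmono : ∫ y in (x - L)..x, ((M - b₃ * x) + b₃ * y) ≤ ∫ y in (x - L)..x, w y := by
    apply intervalIntegral.integral_mono_on hax hint2 hint
    intro y hy
    rcases eq_or_lt_of_le hy.2 with h | h
    · subst h; nlinarith
    · have := holz x y h
      nlinarith
  have hcalc : ∫ y in (x - L)..x, ((M - b₃ * x) + b₃ * y) = M ^ 2 / (2 * b₃) := by
    rw [intervalIntegral.integral_add (intervalIntegrable_const)
      ((intervalIntegrable_id).const_mul b₃),
      intervalIntegral.integral_const, intervalIntegral.integral_const_mul,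
      integral_id]
    have : x - (x - L) = L := by ring
    rw [this]
    simp only [smul_eq_mul]
    field_simp [hL]
    have hb : b₃ * L = M := by rw [hL]; field_simp
    linear_combination (M - b₃ * L) * hb
  linarith

theorem stmt_4 (b₂ b₃ b₄ Δx : ℝ) (hb₂ : 0 < b₂) (hb₃ : 0 < b₃) (hb₄ : 0 < b₄)
    (hΔx : Δx ∈ Set.Ioc (0:ℝ) 1)
    (h₄₃ : b₄^2 / (4 * b₂) > b₃)
    (w : ℝ → ℝ) (hper : Function.Periodic w 1)
    (hint : ∀ x x' : ℝ, IntervalIntegrable w MeasureTheory.volume x' x)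
    (holz : ∀ x₁ x₂ : ℝ, x₂ < x₁ → w x₁ - w x₂ ≤ b₃ * (x₁ - x₂))
    (hbound : ∀ x x' : ℝ, |∫ y in x'..x, w y| ≤ b₂ * Real.sqrt Δx) :
    ∀ x, |w x| ≤ b₄ * Δx ^ ((1:ℝ)/4) := by
  intro x
  by_contra hcon
  push_neg at hcon
  set M : ℝ := b₄ * Δx ^ ((1:ℝ)/4) with hMdef
  have hΔpos := hΔx.1
  have hrpos : (0:ℝ) < Δx ^ ((1:ℝ)/4) := Real.rpow_pos_of_pos hΔpos _
  have hM : 0 < M := mul_pos hb₄ hrpos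
  have hsq : (Δx ^ ((1:ℝ)/4)) ^ 2 = Real.sqrt Δx := by
    rw [← Real.rpow_natCast (Δx ^ ((1:ℝ)/4)) 2, ← Real.rpow_mul hΔpos.le]
    rw [Real.sqrt_eq_rpow]
    norm_num
  have hsqrtpos : 0 < Real.sqrt Δx := Real.sqrt_pos.mpr hΔpos
  have hkey : b₂ * Real.sqrt Δx < M ^ 2 / (2 * b₃) := by
    have hM2 : M ^ 2 = b₄ ^ 2 * Real.sqrt Δx := by
      rw [hMdef, mul_pow, hsq]
    rw [hM2]
    rw [lt_div_iff₀ (by positivity)]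
    have h43 : 4 * b₂ * b₃ < b₄ ^ 2 := by
      rw [gt_iff_lt, lt_div_iff₀ (by positivity)] at h₄₃
      linarith
    nlinarith
  set L : ℝ := M / b₃ with hLdef
  rcases lt_abs.mp hcon with hpos | hneg
  · -- w x > M
    have h1 := aux_int_lb b₃ M x hb₃ hM w (hint x (x - L)) holz hpos.le
    have h2 := hbound x (x - L)
    have h3 : (∫ y in (x - L)..x, w y) ≤ |∫ y in (x - L)..x, w y| := le_abs_self _
    linarith
  · -- -w x > M : reflect
    set v : ℝ → ℝ := fun y => -w (2 * x - y) with hv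
    have hvolz : ∀ y₁ y₂ : ℝ, y₂ < y₁ → v y₁ - v y₂ ≤ b₃ * (y₁ - y₂) := by
      intro y₁ y₂ h
      have := holz (2 * x - y₂) (2 * x - y₁) (by linarith)
      simp only [hv]
      linarith
    have hvint : IntervalIntegrable v volume (x - L) x := by
      have h0 : IntervalIntegrable w volume x (x + L) := hint (x + L) x
      have h1 : IntervalIntegrable (fun y => w (2 * x - y)) volume
          (2 * x - x) (2 * x - (x + L)) := h0.comp_sub_left (2 * x)
      have h2 : IntervalIntegrable (fun y => w (2 * x - y)) volume (x - L) x := by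
        have := h1.symm
        simpa [two_mul, sub_sub, add_comm] using this
      exact h2.neg
    have hvx : M ≤ v x := by
      simp only [hv]
      have : 2 * x - x = x := by ring
      rw [this]
      linarith
    have h1 := aux_int_lb b₃ M x hb₃ hM v hvint hvolz hvx
    have htrans : (∫ y in (x - L)..x, v y) = -(∫ u in x..(x + L), w u) := by
      have := intervalIntegral.integral_comp_sub_left (a := x - L) (b := x) w (2 * x)
      simp only [hv]
      rw [intervalIntegral.integral_neg, this]
      have e1 : 2 * x - x = x := by ring
      have e2 : 2 * x - (x - L) = x + L := by ring
      rw [e1, e2]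
    rw [htrans] at h1
    have h2 := hbound (x + L) x
    have h3 : -(∫ u in x..(x + L), w u) ≤ |∫ u in x..(x + L), w u| := neg_le_abs _
    linarith
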